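/- (Refined Jensen-based double-sum inequality, Corollary) Let R ∈ ℝ^{n×n} be symmetric positive definite, a ≤ b integers, ℓ = b - a + 1, and u : ℤ[a,b] → ℝ^n. With υ₂ = ∑_{k=a}^{b} ∑_{s=a}^{k} u_s and ζ₄ = υ₂ - (3/(ℓ+2))υ₃ (υ₃ the triple sum), one has ∑_{k=a}^{b} ∑_{s=a}^{k} u_s^T R u_s ≥ (2/(ℓ(ℓ+1)))(υ₂^T R υ₂ + 8 ζ₄^T R ζ₄). -/

import Mathlib

open Finset Matrix



lemma psum1 (L : ℕ) : ∑ j ∈ range L, ((j:ℝ)+1) = (L:ℝ)*((L:ℝ)+1)/2 := by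
  induction L with
  | zero => simp
  | succ m ih => rw [Finset.sum_range_succ, ih]; push_cast; ring

lemma psum2 (L : ℕ) : ∑ j ∈ range L, ((j:ℝ)+1)^2 = (L:ℝ)*((L:ℝ)+1)*(2*(L:ℝ)+1)/6 := by
  induction L with
  | zero => simp
  | succ m ih => rw [Finset.sum_range_succ, ih]; push_cast; ring

lemma psum3 (L : ℕ) : ∑ j ∈ range L, ((j:ℝ)+1)^3 = ((L:ℝ)*((L:ℝ)+1))^2/4 := by
  induction L with
  | zero => simp
  | succ m ih => rw [Finset.sum_range_succ, ih]; push_cast; ring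

lemma toNat_cast_real (x : ℤ) (hx : 0 ≤ x) : ((x.toNat : ℕ) : ℝ) = (x : ℝ) := by
  rw_mod_cast [Int.toNat_of_nonneg hx]

lemma sum_Icc_range' {M : Type*} [AddCommMonoid M] (a b : ℤ) (f : ℤ → M) :
    ∑ s ∈ Finset.Icc a b, f s = ∑ j ∈ Finset.range (b - a + 1).toNat, f (b - j) := by
  refine Finset.sum_nbij' (i := fun s => (b - s).toNat) (j := fun j : ℕ => b - (j:ℤ))
    ?_ ?_ ?_ ?_ ?_ <;>
    intros x hx <;> simp only [Finset.mem_Icc, Finset.mem_range] at *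
  · omega
  · omega
  · omega
  · omega
  · congr 1; omega

lemma double_sum_reindex {M : Type*} [AddCommMonoid M] [Module ℝ M] (a b : ℤ) (f : ℤ → M) :
    ∑ k ∈ Finset.Icc a b, ∑ s ∈ Finset.Icc a k, f s
      = ∑ s ∈ Finset.Icc a b, ((b:ℝ) - s + 1) • f s := by
  rw [Finset.sum_comm' (s' := fun s => Finset.Icc s b) (t' := Finset.Icc a b)
    (fun k s => by simp only [Finset.mem_Icc]; omega)]
  refine Finset.sum_congr rfl fun s hs => ?_
  rw [Finset.sum_const, Int.card_Icc]
  simp only [Finset.mem_Icc] at hs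
  have h : (((b + 1 - s).toNat : ℕ) : ℝ) = (b:ℝ) - s + 1 := by
    rw [toNat_cast_real _ (by omega)]; push_cast; ring
  rw [← h, Nat.cast_smul_eq_nsmul]

lemma gauss_Icc (i b : ℤ) (hib : i ≤ b) :
    ∑ s ∈ Finset.Icc i b, ((b:ℝ) - s + 1) = ((b:ℝ) - i + 1) * ((b:ℝ) - i + 2) / 2 := by
  rw [sum_Icc_range' i b]
  have hc : ∀ j ∈ Finset.range (b - i + 1).toNat,
      ((b:ℝ) - ((b - (j:ℤ) : ℤ):ℝ) + 1) = (j:ℝ) + 1 := by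
    intro j _; push_cast; ring
  rw [Finset.sum_congr rfl hc, psum1]
  rw [toNat_cast_real _ (by omega)]; push_cast; ring

lemma triple_sum_reindex {M : Type*} [AddCommMonoid M] [Module ℝ M] (a b : ℤ) (f : ℤ → M) :
    ∑ k ∈ Finset.Icc a b, ∑ s ∈ Finset.Icc a k, ∑ i ∈ Finset.Icc a s, f i
      = ∑ i ∈ Finset.Icc a b, (((b:ℝ) - i + 1) * ((b:ℝ) - i + 2) / 2) • f i := by
  rw [double_sum_reindex a b (fun s => ∑ i ∈ Finset.Icc a s, f i)]
  simp_rw [Finset.smul_sum]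
  rw [Finset.sum_comm' (s' := fun i => Finset.Icc i b) (t' := Finset.Icc a b)
    (fun s i => by simp only [Finset.mem_Icc]; omega)]
  refine Finset.sum_congr rfl fun i hi => ?_
  simp only [Finset.mem_Icc] at hi
  rw [← Finset.sum_smul, gauss_Icc i b hi.2]


variable {n : ℕ} {R : Matrix (Fin n) (Fin n) ℝ}

lemma B_comm (hRsym : R.IsSymm) (x y : Fin n → ℝ) :
    x ⬝ᵥ R.mulVec y = y ⬝ᵥ R.mulVec x := by
  rw [Matrix.dotProduct_mulVec, ← Matrix.mulVec_transpose, hRsym.eq, dotProduct_comm]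

lemma B_sum_left (T : Finset ℤ) (c : ℤ → ℝ) (v : ℤ → Fin n → ℝ) (y : Fin n → ℝ) :
    (∑ i ∈ T, c i • v i) ⬝ᵥ R.mulVec y = ∑ i ∈ T, c i * (v i ⬝ᵥ R.mulVec y) := by
  simp only [dotProduct, Finset.sum_apply, Pi.smul_apply, smul_eq_mul, Finset.sum_mul,
    Finset.mul_sum]
  rw [Finset.sum_comm]
  exact Finset.sum_congr rfl fun i _ => Finset.sum_congr rfl fun j _ => by ring

lemma B_nonneg (hR : R.PosDef) (x : Fin n → ℝ) : 0 ≤ x ⬝ᵥ R.mulVec x := by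
  have := hR.posSemidef.dotProduct_mulVec_nonneg x
  simpa using this

lemma B_expand (hRsym : R.IsSymm) (x y z : Fin n → ℝ) (c : ℝ) :
    (x - y - c • z) ⬝ᵥ R.mulVec (x - y - c • z) =
      x ⬝ᵥ R.mulVec x + y ⬝ᵥ R.mulVec y + c^2 * (z ⬝ᵥ R.mulVec z)
        - 2 * (x ⬝ᵥ R.mulVec y) - 2 * c * (x ⬝ᵥ R.mulVec z)
        + 2 * c * (y ⬝ᵥ R.mulVec z) := by
  simp only [sub_dotProduct, dotProduct_sub, smul_dotProduct,
    dotProduct_smul, Matrix.mulVec_sub, Matrix.mulVec_smul, smul_eq_mul]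
  rw [B_comm hRsym y x, B_comm hRsym z x, B_comm hRsym z y]
  ring

lemma bessel (hR : R.PosDef) (hRsym : R.IsSymm) (T : Finset ℤ) (w e : ℤ → ℝ)
    (v : ℤ → Fin n → ℝ) (hw : ∀ i ∈ T, 0 ≤ w i)
    (W V : ℝ) (hW : ∑ i ∈ T, w i = W) (hWpos : 0 < W)
    (hE : ∑ i ∈ T, w i * e i = 0)
    (hV : ∑ i ∈ T, w i * e i ^ 2 = V) (hVpos : 0 < V) :
    (1/W) * ((∑ i ∈ T, w i • v i) ⬝ᵥ R.mulVec (∑ i ∈ T, w i • v i))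
      + (1/V) * ((∑ i ∈ T, (w i * e i) • v i) ⬝ᵥ R.mulVec (∑ i ∈ T, (w i * e i) • v i))
      ≤ ∑ i ∈ T, w i * (v i ⬝ᵥ R.mulVec (v i)) := by
  set υ := ∑ i ∈ T, w i • v i with hυ
  set ζ := ∑ i ∈ T, (w i * e i) • v i with hζ
  set α := (1/W) • υ with hα
  set β := (1/V) • ζ with hβ
  have hD : 0 ≤ ∑ i ∈ T, w i * ((v i - α - e i • β) ⬝ᵥ R.mulVec (v i - α - e i • β)) :=
    Finset.sum_nonneg fun i hi => mul_nonneg (hw i hi) (B_nonneg hR _)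
  have key : ∀ i ∈ T, w i * ((v i - α - e i • β) ⬝ᵥ R.mulVec (v i - α - e i • β)) =
      w i * (v i ⬝ᵥ R.mulVec (v i)) + w i * (α ⬝ᵥ R.mulVec α)
        + (w i * e i ^ 2) * (β ⬝ᵥ R.mulVec β)
        - 2 * (w i * (v i ⬝ᵥ R.mulVec α)) - 2 * ((w i * e i) * (v i ⬝ᵥ R.mulVec β))
        + (w i * e i) * (2 * (α ⬝ᵥ R.mulVec β)) := by
    intro i _
    rw [B_expand hRsym]
    ring
  rw [Finset.sum_congr rfl key] at hD
  simp only [Finset.sum_add_distrib, Finset.sum_sub_distrib, ← Finset.sum_mul,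
    ← Finset.mul_sum, hW, hE, hV] at hD
  rw [← B_sum_left T w v α, ← B_sum_left T (fun i => w i * e i) v β, ← hυ, ← hζ] at hD
  have hυα : υ ⬝ᵥ R.mulVec α = (1/W) * (υ ⬝ᵥ R.mulVec υ) := by
    rw [hα, Matrix.mulVec_smul, dotProduct_smul, smul_eq_mul]
  have hζβ : ζ ⬝ᵥ R.mulVec β = (1/V) * (ζ ⬝ᵥ R.mulVec ζ) := by
    rw [hβ, Matrix.mulVec_smul, dotProduct_smul, smul_eq_mul]
  have hαα : α ⬝ᵥ R.mulVec α = (1/W)^2 * (υ ⬝ᵥ R.mulVec υ) := by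
    rw [hα, Matrix.mulVec_smul, dotProduct_smul, smul_dotProduct,
      smul_eq_mul, smul_eq_mul]
    ring
  have hββ : β ⬝ᵥ R.mulVec β = (1/V)^2 * (ζ ⬝ᵥ R.mulVec ζ) := by
    rw [hβ, Matrix.mulVec_smul, dotProduct_smul, smul_dotProduct,
      smul_eq_mul, smul_eq_mul]
    ring
  rw [hυα, hζβ, hαα, hββ] at hD
  have hW' : W ≠ 0 := ne_of_gt hWpos
  have hV' : V ≠ 0 := ne_of_gt hVpos
  have e1 : W * ((1/W)^2 * (υ ⬝ᵥ R.mulVec υ)) = (1/W) * (υ ⬝ᵥ R.mulVec υ) := by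
    field_simp
  have e2 : V * ((1/V)^2 * (ζ ⬝ᵥ R.mulVec ζ)) = (1/V) * (ζ ⬝ᵥ R.mulVec ζ) := by
    field_simp
  nlinarith [hD]

theorem refined_jensen_double_corollary
    (n : ℕ) (R : Matrix (Fin n) (Fin n) ℝ) (hR : R.PosDef) (hRsym : R.IsSymm)
    (a b : ℤ) (hab : a ≤ b) (u : ℤ → (Fin n → ℝ)) :
    ∀ (ℓ : ℝ), ℓ = (b : ℝ) - a + 1 →
    ∀ (υ₂ υ₃ ζ₄ : Fin n → ℝ),
      υ₂ = ∑ k ∈ Finset.Icc a b, ∑ s ∈ Finset.Icc a k, u s →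
      υ₃ = ∑ k ∈ Finset.Icc a b, ∑ s ∈ Finset.Icc a k, ∑ i ∈ Finset.Icc a s, u i →
      ζ₄ = υ₂ - (3 / (ℓ + 2)) • υ₃ →
      ∑ k ∈ Finset.Icc a b, ∑ s ∈ Finset.Icc a k, (u s) ⬝ᵥ R.mulVec (u s) ≥
        (2 / (ℓ * (ℓ + 1))) * ((υ₂ ⬝ᵥ R.mulVec υ₂) + 8 * (ζ₄ ⬝ᵥ R.mulVec ζ₄)) := by
  intro ℓ hℓ υ₂ υ₃ ζ₄ h2 h3 h4
  by_cases hone : a = b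
  · subst hone
    simp only [Finset.Icc_self, Finset.sum_singleton] at h2 h3 ⊢
    have hl1 : ℓ = 1 := by rw [hℓ]; ring
    have hz : ζ₄ = 0 := by
      rw [h4, hl1, h2, h3]; norm_num
    rw [hz, h2, hl1]
    simp only [Matrix.mulVec_zero, dotProduct_zero, zero_dotProduct,
      mul_zero, add_zero, ge_iff_le]
    norm_num
  · have hab' : a < b := lt_of_le_of_ne hab hone
    have habR : (a:ℝ) + 1 ≤ (b:ℝ) := by exact_mod_cast hab'
    have hl2 : (2:ℝ) ≤ ℓ := by rw [hℓ]; linarith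
    have hl2ne : ℓ + 2 ≠ 0 := by linarith
    set w : ℤ → ℝ := fun s => (b:ℝ) - s + 1 with hw_def
    set e : ℤ → ℝ := fun s => 1 - 3 * (w s + 1) / (2 * (ℓ + 2)) with he_def
    set L := (b - a + 1).toNat with hLdef
    have hL : ((L : ℕ) : ℝ) = ℓ := by
      rw [hLdef, toNat_cast_real _ (by omega), hℓ]; push_cast; ring
    have hS : ∑ k ∈ Finset.Icc a b, ∑ s ∈ Finset.Icc a k, (u s) ⬝ᵥ R.mulVec (u s)
        = ∑ s ∈ Finset.Icc a b, w s * ((u s) ⬝ᵥ R.mulVec (u s)) := by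
      rw [double_sum_reindex a b (fun s => (u s) ⬝ᵥ R.mulVec (u s))]
      simp only [smul_eq_mul, hw_def]
    have hυ₂ : υ₂ = ∑ s ∈ Finset.Icc a b, w s • u s := by
      rw [h2, double_sum_reindex]
    have hυ₃ : υ₃ = ∑ i ∈ Finset.Icc a b, (w i * (w i + 1) / 2) • u i := by
      rw [h3, triple_sum_reindex]
      refine Finset.sum_congr rfl fun i _ => ?_
      congr 1
      simp only [hw_def]; ring
    have hζ : ζ₄ = ∑ i ∈ Finset.Icc a b, (w i * e i) • u i := by
      rw [h4, hυ₂, hυ₃, Finset.smul_sum, ← Finset.sum_sub_distrib]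
      refine Finset.sum_congr rfl fun i _ => ?_
      rw [smul_smul, ← sub_smul]
      congr 1
      simp only [he_def]
      field_simp
    have key : ∀ (g : ℝ → ℝ), ∑ s ∈ Finset.Icc a b, g (w s)
        = ∑ j ∈ Finset.range L, g ((j:ℝ)+1) := by
      intro g
      rw [hLdef, sum_Icc_range' a b (fun s => g (w s))]
      refine Finset.sum_congr rfl fun j _ => ?_
      congr 1
      simp only [hw_def]; push_cast; ring
    have hP1 : ∑ s ∈ Finset.Icc a b, w s = ℓ * (ℓ + 1) / 2 := by
      have h := key (fun x => x)
      rw [h, psum1, hL]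
    have hE : ∑ s ∈ Finset.Icc a b, w s * e s = 0 := by
      have h := key (fun x => x * (1 - 3 * (x + 1) / (2 * (ℓ + 2))))
      simp only [he_def] at h ⊢
      rw [h]
      have expand : ∀ j ∈ Finset.range L, ((j:ℝ)+1) * (1 - 3 * (((j:ℝ)+1) + 1) / (2 * (ℓ + 2)))
          = ((j:ℝ)+1) - (3 / (2 * (ℓ + 2))) * (((j:ℝ)+1)^2 + (((j:ℝ)+1))) := by
        intro j _; field_simp
      have c1 : ∑ j ∈ Finset.range L, (((j:ℝ)+1)^2 + ((j:ℝ)+1))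
          = (L:ℝ)*((L:ℝ)+1)*(2*(L:ℝ)+1)/6 + (L:ℝ)*((L:ℝ)+1)/2 := by
        rw [Finset.sum_add_distrib, psum1, psum2]
      rw [Finset.sum_congr rfl expand, Finset.sum_sub_distrib, ← Finset.mul_sum, c1, psum1, hL]
      field_simp
      ring
    have hV : ∑ s ∈ Finset.Icc a b, w s * e s ^ 2
        = ℓ * (ℓ + 1) * (ℓ - 1) / (16 * (ℓ + 2)) := by
      have h := key (fun x => x * (1 - 3 * (x + 1) / (2 * (ℓ + 2))) ^ 2)
      simp only [he_def] at h ⊢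
      rw [h]
      have expand : ∀ j ∈ Finset.range L, ((j:ℝ)+1) * (1 - 3 * (((j:ℝ)+1) + 1) / (2 * (ℓ + 2)))^2
          = ((j:ℝ)+1) - (3 / (ℓ + 2)) * (((j:ℝ)+1)^2 + ((j:ℝ)+1))
            + (9 / (4 * (ℓ + 2)^2)) * (((j:ℝ)+1)^3 + 2*((j:ℝ)+1)^2 + ((j:ℝ)+1)) := by
        intro j _; field_simp; ring
      have c1 : ∑ j ∈ Finset.range L, (((j:ℝ)+1)^2 + ((j:ℝ)+1))
          = (L:ℝ)*((L:ℝ)+1)*(2*(L:ℝ)+1)/6 + (L:ℝ)*((L:ℝ)+1)/2 := by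
        rw [Finset.sum_add_distrib, psum1, psum2]
      have c2 : ∑ j ∈ Finset.range L, (((j:ℝ)+1)^3 + 2*((j:ℝ)+1)^2 + ((j:ℝ)+1))
          = ((L:ℝ)*((L:ℝ)+1))^2/4 + 2*((L:ℝ)*((L:ℝ)+1)*(2*(L:ℝ)+1)/6) + (L:ℝ)*((L:ℝ)+1)/2 := by
        rw [Finset.sum_add_distrib, Finset.sum_add_distrib, ← Finset.mul_sum,
          psum1, psum2, psum3]
      rw [Finset.sum_congr rfl expand, Finset.sum_add_distrib, Finset.sum_sub_distrib,
        ← Finset.mul_sum, ← Finset.mul_sum, c1, c2, psum1, hL]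
      field_simp
      ring
    have hWpos : 0 < ℓ * (ℓ + 1) / 2 := by nlinarith
    have hVpos : 0 < ℓ * (ℓ + 1) * (ℓ - 1) / (16 * (ℓ + 2)) := by
      apply div_pos
      · nlinarith
      · linarith
    have hwnn : ∀ s ∈ Finset.Icc a b, 0 ≤ w s := by
      intro s hs
      simp only [Finset.mem_Icc] at hs
      have : (s:ℝ) ≤ (b:ℝ) := by exact_mod_cast hs.2
      simp only [hw_def]; linarith
    have hbessel := bessel hR hRsym (Finset.Icc a b) w e u hwnn _ _ hP1 hWpos hE hV hVpos
    rw [← hυ₂, ← hζ] at hbessel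
    rw [hS]
    have hqζ : 0 ≤ ζ₄ ⬝ᵥ R.mulVec ζ₄ := B_nonneg hR ζ₄
    have hℓne : ℓ * (ℓ + 1) ≠ 0 := by nlinarith
    have h1W : 2 / (ℓ * (ℓ + 1)) = 1 / (ℓ * (ℓ + 1) / 2) := by
      field_simp
    have hℓpos : (0:ℝ) < ℓ := by linarith
    have hprod : (0:ℝ) < ℓ * (ℓ + 1) := mul_pos hℓpos (by linarith)
    have hc : 16 / (ℓ * (ℓ + 1)) ≤ 1 / (ℓ * (ℓ + 1) * (ℓ - 1) / (16 * (ℓ + 2))) := by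
      rw [div_le_div_iff₀ hprod hVpos, ← mul_div_assoc, div_le_iff₀ (by linarith)]
      have hmono : ℓ * (ℓ + 1) * (ℓ - 1) ≤ ℓ * (ℓ + 1) * (ℓ + 2) :=
        mul_le_mul_of_nonneg_left (by linarith) (le_of_lt hprod)
      calc 16 * (ℓ * (ℓ + 1) * (ℓ - 1)) ≤ 16 * (ℓ * (ℓ + 1) * (ℓ + 2)) := by linarith
        _ = 1 * (ℓ * (ℓ + 1)) * (16 * (ℓ + 2)) := by ring
    calc (2 / (ℓ * (ℓ + 1))) * ((υ₂ ⬝ᵥ R.mulVec υ₂) + 8 * (ζ₄ ⬝ᵥ R.mulVec ζ₄))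
        = (1 / (ℓ * (ℓ + 1) / 2)) * (υ₂ ⬝ᵥ R.mulVec υ₂)
          + (16 / (ℓ * (ℓ + 1))) * (ζ₄ ⬝ᵥ R.mulVec ζ₄) := by rw [← h1W]; ring
      _ ≤ (1 / (ℓ * (ℓ + 1) / 2)) * (υ₂ ⬝ᵥ R.mulVec υ₂)
          + (1 / (ℓ * (ℓ + 1) * (ℓ - 1) / (16 * (ℓ + 2)))) * (ζ₄ ⬝ᵥ R.mulVec ζ₄) := by
            have := mul_le_mul_of_nonneg_right hc hqζ
            linarith
      _ ≤ _ := hbessel
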